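/- Let s, κ ∈ ℂ and let σ, σ̃ : ℝ → ℂ be differentiable functions. Suppose R : ℝ → Matrix (Fin 3) (Fin 3) ℂ is differentiable, R(x) is unit lower triangular for every x, and R'(x) + R(x)·F(σ̃)(x) = F(σ)(x)·R(x) for all x ∈ ℝ. Set σ̂ = σ − σ̃. Then for all x ∈ ℝ the (3,1) entry of R satisfies both R₃₁(x) = (s+κ)σ̂'(x) + (1/2)(s²−κ²)σ̂(x)² and R₃₁(x) = −(s−κ)σ̂'(x) + (1/2)(s²−κ²)σ̂(x)². -/
import Mathlib


/-- The matrix F(σ) associated with the differential expression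
ℓ_{σ,s,κ}(y) = y''' + s(σ'y)' + sσ'y' + κσ''y. -/
noncomputable def Fmat (s κ : ℂ) (σ : ℝ → ℂ) (x : ℝ) : Matrix (Fin 3) (Fin 3) ℂ :=
  !![ -(s + κ) * σ x, 1, 0;
      -(3 * κ ^ 2 / 2 + s ^ 2 / 2 + 2 * κ * s) * σ x ^ 2, 2 * κ * σ x, 1;
      κ * (κ ^ 2 - s ^ 2) * σ x ^ 3,
        -(3 * κ ^ 2 / 2 + s ^ 2 / 2 - 2 * κ * s) * σ x ^ 2, (s - κ) * σ x ]

/-- A 3×3 matrix is unit lower triangular if its diagonal entries are 1 and the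
entries above the diagonal are 0. -/
def UnitLowerTriangular (A : Matrix (Fin 3) (Fin 3) ℂ) : Prop :=
  (∀ i, A i i = 1) ∧ ∀ i j : Fin 3, i < j → A i j = 0

/-- If R is a differentiable unit lower triangular matrix function satisfying
R' + R·F(σ̃) = F(σ)·R, with σ, σ̃ differentiable and σ̂ = σ − σ̃, then the (3,1)
entry of R satisfies both R₃₁ = (s+κ)σ̂' + (1/2)(s²−κ²)σ̂² and
R₃₁ = −(s−κ)σ̂' + (1/2)(s²−κ²)σ̂². -/
theorem corner_entry_formulas (s κ : ℂ) (σ σtil : ℝ → ℂ)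
    (hσ : Differentiable ℝ σ) (hσtil : Differentiable ℝ σtil)
    (R R' : ℝ → Matrix (Fin 3) (Fin 3) ℂ)
    (hR : ∀ (x : ℝ) (i j : Fin 3), HasDerivAt (fun t => R t i j) (R' x i j) x)
    (hTri : ∀ x : ℝ, UnitLowerTriangular (R x))
    (heq : ∀ x : ℝ, R' x + R x * Fmat s κ σtil x = Fmat s κ σ x * R x) :
    ∀ x : ℝ,
      R x 2 0 = (s + κ) * deriv (fun t => σ t - σtil t) x
          + (1 / 2) * (s ^ 2 - κ ^ 2) * (σ x - σtil x) ^ 2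
      ∧ R x 2 0 = -(s - κ) * deriv (fun t => σ t - σtil t) x
          + (1 / 2) * (s ^ 2 - κ ^ 2) * (σ x - σtil x) ^ 2 := by
  -- derivative of diagonal entries is zero
  have hd' : ∀ (t : ℝ) (i j : Fin 3), i ≤ j → R' t i j = 0 := by
    intro t i j hij
    rcases lt_or_eq_of_le hij with h | h
    · have hc : (fun u => R u i j) = fun _ => (0 : ℂ) := by
        funext u; exact (hTri u).2 i j h
      have := hR t i j
      rw [hc] at this
      exact this.unique (hasDerivAt_const t 0)
    · subst h
      have hc : (fun u => R u i i) = fun _ => (1 : ℂ) := by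
        funext u; exact (hTri u).1 i
      have := hR t i i
      rw [hc] at this
      exact this.unique (hasDerivAt_const t 1)
  have entry : ∀ (t : ℝ) (i j : Fin 3),
      R' t i j + (R t i 0 * Fmat s κ σtil t 0 j + R t i 1 * Fmat s κ σtil t 1 j
        + R t i 2 * Fmat s κ σtil t 2 j)
      = Fmat s κ σ t i 0 * R t 0 j + Fmat s κ σ t i 1 * R t 1 j
        + Fmat s κ σ t i 2 * R t 2 j := by
    intro t i j
    have h := congrFun (congrFun (heq t) i) j
    simpa [Matrix.add_apply, Matrix.mul_apply, Fin.sum_univ_three] using h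
  have h10 : ∀ t, R t 1 0 = (s + κ) * (σ t - σtil t) := by
    intro t
    have h := entry t 0 0
    have e1 := (hTri t).1 0
    have e01 := (hTri t).2 0 1 (by decide)
    have e02 := (hTri t).2 0 2 (by decide)
    rw [hd' t 0 0 le_rfl, e1, e01, e02] at h
    simp [Fmat] at h
    linear_combination -h
  have h21 : ∀ t, R t 2 1 = (s - κ) * (σ t - σtil t) := by
    intro t
    have h := entry t 1 1
    have e1 := (hTri t).1 1
    have e12 := (hTri t).2 1 2 (by decide)
    have e01 := (hTri t).2 0 1 (by decide)
    rw [hd' t 1 1 le_rfl, e1, e12, e01, h10 t] at h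
    simp [Fmat] at h
    linear_combination -h
  intro x
  have hsig : HasDerivAt (fun t => σ t - σtil t) (deriv σ x - deriv σtil x) x :=
    ((hσ x).hasDerivAt).sub ((hσtil x).hasDerivAt)
  have hderiv : deriv (fun t => σ t - σtil t) x = deriv σ x - deriv σtil x := hsig.deriv
  have hR10' : R' x 1 0 = (s + κ) * (deriv σ x - deriv σtil x) := by
    have h1 : (fun t => R t 1 0) = fun t => (s + κ) * (σ t - σtil t) := funext h10
    have h2 := hR x 1 0
    rw [h1] at h2
    exact h2.unique (hsig.const_mul (s + κ))
  have hR21' : R' x 2 1 = (s - κ) * (deriv σ x - deriv σtil x) := by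
    have h1 : (fun t => R t 2 1) = fun t => (s - κ) * (σ t - σtil t) := funext h21
    have h2 := hR x 2 1
    rw [h1] at h2
    exact h2.unique (hsig.const_mul (s - κ))
  constructor
  · have h := entry x 1 0
    have e0 := (hTri x).1 0
    have e11 := (hTri x).1 1
    have e12 := (hTri x).2 1 2 (by decide)
    rw [hR10', e0, e11, e12, h10 x] at h
    simp [Fmat] at h
    rw [hderiv]
    linear_combination -h
  · have h := entry x 2 1
    have e11 := (hTri x).1 1
    have e22 := (hTri x).1 2
    have e01 := (hTri x).2 0 1 (by decide)
    rw [hR21', e11, e22, e01, h21 x] at h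
    simp [Fmat] at h
    rw [hderiv]
    linear_combination h
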